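/- Let n ≥ 1 and let P be a polynomial with complex coefficients in the n² entries of an n×n matrix. Then P(S A S⁻¹) = P(A) for all A ∈ M_n(ℂ) and all S ∈ GL_n(ℂ) if and only if there exists a polynomial Q ∈ ℂ[y_0, …, y_{n−1}] such that P(A) = Q(c_0(A), c_1(A), …, c_{n−1}(A)) for all A ∈ M_n(ℂ), where c_i(A) denotes the coefficient of t^i in the characteristic polynomial det(t·I_n − A). (Conjugation-invariant polynomial functions on matrices are exactly the polynomials in the coefficients of the characteristic polynomial, i.e., the symmetric functions of the eigenvalues.) -/

import Mathlib

open Matrix Polynomial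

namespace ConjInv

noncomputable def gam (n : ℕ) (k : ℕ) : MvPolynomial (Fin n × Fin n) ℂ :=
  ((Matrix.mvPolynomialX (Fin n) (Fin n) ℂ).charpoly).coeff k

lemma eval_gam {n : ℕ} (A : Matrix (Fin n) (Fin n) ℂ) (k : ℕ) :
    MvPolynomial.eval (fun p => A p.1 p.2) (gam n k) = A.charpoly.coeff k := by
  have h := Matrix.mvPolynomialX_mapMatrix_eval (m := Fin n) (R := ℂ) A
  conv_rhs => rw [← h]
  rw [RingHom.mapMatrix_apply, Matrix.charpoly_map, Polynomial.coeff_map]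
  rfl

lemma charpoly_conj {n : ℕ} (A S : Matrix (Fin n) (Fin n) ℂ) (hS : IsUnit S.det) :
    (S * A * S⁻¹).charpoly = A.charpoly := by
  have h1 : S * S⁻¹ = 1 := Matrix.mul_nonsing_inv S hS
  have h2 : S⁻¹ * S = 1 := Matrix.nonsing_inv_mul S hS
  have key : charmatrix (S * A * S⁻¹) = S.map C * charmatrix A * S⁻¹.map C := by
    rw [charmatrix]
    rw [charmatrix]
    rw [Matrix.mul_sub, Matrix.sub_mul]
    congr 1
    · rw [Matrix.mul_assoc, Matrix.scalar_commute X (fun r => (Commute.all _ _)) (S⁻¹.map C)]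
      rw [← Matrix.mul_assoc, ← Matrix.map_mul, h1]
      simp
    · simp [Matrix.map_mul]
  rw [Matrix.charpoly, key, Matrix.det_mul, Matrix.det_mul, ← Matrix.charpoly]
  have hd1 : (S.map (C : ℂ →+* ℂ[X])).det = C S.det := (RingHom.map_det C S).symm
  have hd2 : (S⁻¹.map (C : ℂ →+* ℂ[X])).det = C S⁻¹.det := (RingHom.map_det C S⁻¹).symm
  have : S.det * S⁻¹.det = 1 := by
    rw [← Matrix.det_mul, h1, Matrix.det_one]
  rw [hd1, hd2, mul_comm, ← mul_assoc, ← _root_.map_mul, mul_comm S⁻¹.det, this]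
  simp

end ConjInv

open Matrix Polynomial

namespace ConjInv

lemma exists_roots_fun {n : ℕ} (A : Matrix (Fin n) (Fin n) ℂ) :
    ∃ μ : Fin n → ℂ, A.charpoly = ∏ i : Fin n, (X - C (μ i)) := by
  have hmon := A.charpoly_monic
  have hsp : A.charpoly.Splits := IsAlgClosed.splits _
  have hdeg : A.charpoly.natDegree = n :=
    A.charpoly_natDegree_eq_dim.trans (Fintype.card_fin n)
  have hcard : A.charpoly.roots.card = n :=
    (Polynomial.splits_iff_card_roots.mp hsp).trans hdeg
  set l := A.charpoly.roots.toList with hl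
  have hlen : l.length = n := by
    rw [hl, Multiset.length_toList, hcard]
  refine ⟨fun i => l.get (Fin.cast hlen.symm i), ?_⟩
  have heq : A.charpoly = (A.charpoly.roots.map fun a => X - C a).prod :=
    hsp.eq_prod_roots_of_monic hmon
  rw [heq]
  have hroots : A.charpoly.roots = (l : Multiset ℂ) := (A.charpoly.roots.coe_toList).symm
  rw [hroots, Multiset.map_coe, Multiset.prod_coe]
  have hmap : l.map (fun a => X - C a) = List.ofFn (fun i : Fin l.length => X - C (l.get i)) := by
    conv_lhs => rw [← List.ofFn_get l, List.map_ofFn]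
    rfl
  rw [hmap, List.prod_ofFn]
  exact Eq.symm <| Fintype.prod_bijective (Fin.cast hlen.symm) (finCongr hlen.symm).bijective
    (fun i : Fin n => X - C (l.get (Fin.cast hlen.symm i)))
    (fun j : Fin l.length => X - C (l.get j)) (fun i => rfl)

lemma exists_diagonalization {n : ℕ} (A : Matrix (Fin n) (Fin n) ℂ) (μ : Fin n → ℂ)
    (hchar : A.charpoly = ∏ i : Fin n, (X - C (μ i))) (hinj : Function.Injective μ) :
    ∃ S : Matrix (Fin n) (Fin n) ℂ, IsUnit S.det ∧ A = S * diagonal μ * S⁻¹ := by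
  have hev : ∀ i : Fin n, ∃ v : Fin n → ℂ, v ≠ 0 ∧ A *ᵥ v = μ i • v := by
    intro i
    have hdet : (μ i • (1 : Matrix (Fin n) (Fin n) ℂ) - A).det = 0 := by
      have h1 : (μ i • (1 : Matrix (Fin n) (Fin n) ℂ) - A) =
          A.charmatrix.map (Polynomial.evalRingHom (μ i)) := by
        ext a b
        by_cases hab : a = b
        · subst hab
          simp [Matrix.charmatrix_apply_eq, Matrix.smul_apply, Matrix.sub_apply,
            Matrix.one_apply_eq]
        · simp [Matrix.charmatrix_apply_ne _ _ _ hab, Matrix.smul_apply, Matrix.sub_apply,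
            Matrix.one_apply_ne hab]
      have h2 : (A.charmatrix.map (Polynomial.evalRingHom (μ i))).det
          = Polynomial.evalRingHom (μ i) A.charmatrix.det :=
        ((Polynomial.evalRingHom (μ i)).map_det A.charmatrix).symm
      rw [h1, h2, ← Matrix.charpoly, hchar]
      simp only [coe_evalRingHom, Polynomial.eval_prod]
      rw [Finset.prod_eq_zero (Finset.mem_univ i)]
      simp
    obtain ⟨v, hv0, hv⟩ := (Matrix.exists_mulVec_eq_zero_iff).mpr hdet
    refine ⟨v, hv0, ?_⟩
    have hsub : (μ i • (1 : Matrix (Fin n) (Fin n) ℂ)) *ᵥ v - A *ᵥ v = 0 := by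
      rw [← Matrix.sub_mulVec, hv]
    have h3 : (μ i • (1 : Matrix (Fin n) (Fin n) ℂ)) *ᵥ v = A *ᵥ v := sub_eq_zero.mp hsub
    rw [← h3, Matrix.smul_mulVec, Matrix.one_mulVec]
  choose v hv0 hveq using hev
  have hli : LinearIndependent ℂ v := by
    apply Module.End.eigenvectors_linearIndependent' (Matrix.mulVecLin A) μ hinj
    intro i
    constructor
    · rw [Module.End.mem_eigenspace_iff]
      exact (Matrix.mulVecLin_apply A (v i)).trans (hveq i)
    · exact hv0 i
  set S : Matrix (Fin n) (Fin n) ℂ := Matrix.of (fun i j => v j i) with hS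
  have hdetS : IsUnit S.det := by
    by_contra hne
    have hdet0 : S.det = 0 := by
      simpa [isUnit_iff_ne_zero] using hne
    obtain ⟨c, hc0, hc⟩ := (Matrix.exists_mulVec_eq_zero_iff).mpr hdet0
    have hsum : ∑ j, c j • v j = 0 := by
      funext i
      have := congrFun hc i
      simpa [Matrix.mulVec, dotProduct, Finset.sum_apply, hS, Matrix.of_apply, mul_comm] using this
    exact hc0 (funext (Fintype.linearIndependent_iff.mp hli c hsum))
  have hAS : A * S = S * diagonal μ := by
    ext i j
    have h1 : (A * S) i j = (A *ᵥ v j) i := by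
      simp [Matrix.mul_apply, Matrix.mulVec, dotProduct, hS]
    rw [h1, hveq j]
    simp [Matrix.mul_diagonal, hS, mul_comm]
  refine ⟨S, hdetS, ?_⟩
  rw [← hAS, Matrix.mul_assoc, Matrix.mul_nonsing_inv _ hdetS, Matrix.mul_one]

end ConjInv

open Matrix Polynomial

namespace ConjInv

lemma aeval_eq_eval {n : ℕ} (f : Fin n → ℂ) (p : MvPolynomial (Fin n) ℂ) :
    MvPolynomial.aeval f p = MvPolynomial.eval f p := rfl

lemma coeff_prod_X_sub_C {n : ℕ} (μ : Fin n → ℂ) (k : ℕ) (hk : k ≤ n) :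
    (∏ i : Fin n, (X - C (μ i))).coeff k =
      (-1 : ℂ) ^ (n - k) * MvPolynomial.eval μ (MvPolynomial.esymm (Fin n) ℂ (n - k)) := by
  set s : Multiset ℂ := Finset.univ.val.map μ with hs
  have hcard : Multiset.card s = n := by simp [hs]
  have h1 : (∏ i : Fin n, (X - C (μ i))) = (s.map fun t => X - C t).prod := by
    rw [hs, Multiset.map_map]
    rfl
  have h2 : MvPolynomial.eval μ (MvPolynomial.esymm (Fin n) ℂ (n - k)) = s.esymm (n - k) := by
    rw [← aeval_eq_eval, MvPolynomial.aeval_esymm_eq_multiset_esymm]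
  rw [h1, h2, Multiset.prod_X_sub_C_coeff s (by rw [hcard]; exact hk), hcard]

/-- index reversal -/
def rev {n : ℕ} (i : Fin n) : Fin n := ⟨n - 1 - (i : ℕ), by have := i.isLt; omega⟩

/-- substitution turning a polynomial in the elementary symmetric functions into a
polynomial in the charpoly coefficients -/
noncomputable def psi {n : ℕ} (R : MvPolynomial (Fin n) ℂ) : MvPolynomial (Fin n) ℂ :=
  MvPolynomial.bind₁
    (fun i : Fin n => MvPolynomial.C ((-1 : ℂ) ^ ((i : ℕ) + 1)) * MvPolynomial.X (rev i)) R

lemma eval_psi {n : ℕ} (R : MvPolynomial (Fin n) ℂ) (μ c : Fin n → ℂ)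
    (hc : ∀ k : Fin n, c k = (∏ i : Fin n, (X - C (μ i))).coeff (k : ℕ)) :
    MvPolynomial.eval c (psi R) =
      MvPolynomial.eval μ (MvPolynomial.bind₁
        (fun i : Fin n => MvPolynomial.esymm (Fin n) ℂ ((i : ℕ) + 1)) R) := by
  rw [← aeval_eq_eval, ← aeval_eq_eval, psi, MvPolynomial.aeval_bind₁,
    MvPolynomial.aeval_bind₁]
  have hfun : (fun i : Fin n =>
      MvPolynomial.aeval c (MvPolynomial.C ((-1 : ℂ) ^ ((i : ℕ) + 1)) *
        MvPolynomial.X (rev i))) =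
      (fun i : Fin n =>
        MvPolynomial.aeval μ (MvPolynomial.esymm (Fin n) ℂ ((i : ℕ) + 1))) := by
    funext i
    have hlt := i.isLt
    have hrev : ((rev i : Fin n) : ℕ) = n - 1 - (i : ℕ) := rfl
    have hni : n - (n - 1 - (i : ℕ)) = (i : ℕ) + 1 := by omega
    rw [_root_.map_mul, MvPolynomial.aeval_X, MvPolynomial.aeval_C, aeval_eq_eval,
      hc (rev i), hrev, coeff_prod_X_sub_C μ _ (by omega), hni]
    have halg : (algebraMap ℂ ℂ) ((-1 : ℂ) ^ ((i : ℕ) + 1)) = (-1 : ℂ) ^ ((i : ℕ) + 1) := rfl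
    rw [halg, ← mul_assoc, ← pow_add,
      show (i : ℕ) + 1 + ((i : ℕ) + 1) = 2 * ((i : ℕ) + 1) by ring, pow_mul]
    norm_num

  rw [hfun]

/-- the (doubled) discriminant -/
noncomputable def delta (n : ℕ) : MvPolynomial (Fin n) ℂ :=
  ∏ p ∈ Finset.univ.offDiag, (MvPolynomial.X p.1 - MvPolynomial.X p.2)

lemma delta_isSymmetric (n : ℕ) : (delta n).IsSymmetric := by
  intro e
  unfold delta
  rw [map_prod]
  simp only [map_sub, MvPolynomial.rename_X]
  apply Finset.prod_nbij' (fun p => (e p.1, e p.2)) (fun p => (e.symm p.1, e.symm p.2))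
  · intro p hp
    simp only [Finset.mem_offDiag] at hp ⊢
    exact ⟨Finset.mem_univ _, Finset.mem_univ _, fun h => hp.2.2 (e.injective h)⟩
  · intro p hp
    simp only [Finset.mem_offDiag] at hp ⊢
    exact ⟨Finset.mem_univ _, Finset.mem_univ _, fun h => hp.2.2 (e.symm.injective h)⟩
  · intro p _
    simp
  · intro p _
    simp
  · intro p _
    rfl

lemma delta_eval_ne_zero_iff {n : ℕ} (μ : Fin n → ℂ) :
    MvPolynomial.eval μ (delta n) ≠ 0 ↔ Function.Injective μ := by
  unfold delta
  rw [map_prod]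
  simp only [map_sub, MvPolynomial.eval_X]
  rw [Finset.prod_ne_zero_iff]
  constructor
  · intro h a b hab
    by_contra hne
    have hmem : (a, b) ∈ Finset.univ.offDiag := by
      simp [Finset.mem_offDiag, hne]
    have := h _ hmem
    simp [hab] at this
  · intro hinj p hp
    simp only [Finset.mem_offDiag] at hp
    exact sub_ne_zero.mpr (fun h => hp.2.2 (hinj h))

lemma perm_conj {n : ℕ} (e : Equiv.Perm (Fin n)) (d : Fin n → ℂ) :
    ∃ Pe : Matrix (Fin n) (Fin n) ℂ, IsUnit Pe.det ∧
      diagonal (d ∘ e) = Pe * diagonal d * Pe⁻¹ := by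
  classical
  set Pe : Matrix (Fin n) (Fin n) ℂ := e.toPEquiv.toMatrix with hPe
  set Pe' : Matrix (Fin n) (Fin n) ℂ := e.symm.toPEquiv.toMatrix with hPe'
  have hunit : Pe * Pe' = 1 := by
    rw [hPe, hPe', ← PEquiv.toMatrix_trans, ← Equiv.toPEquiv_trans]
    simp
  have hdet : IsUnit Pe.det := Matrix.isUnit_det_of_right_inverse hunit
  have hinv : Pe⁻¹ = Pe' := Matrix.inv_eq_right_inv hunit
  refine ⟨Pe, hdet, ?_⟩
  rw [hinv, hPe, hPe', PEquiv.toMatrix_toPEquiv_mul,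
    PEquiv.mul_toMatrix_toPEquiv, Equiv.symm_symm, Matrix.submatrix_submatrix]
  ext i j
  by_cases h : i = j
  · subst h; simp
  · rw [Matrix.submatrix_apply]
    simp only [Function.comp]
    rw [Matrix.diagonal_apply_ne _ h, Matrix.diagonal_apply_ne]
    intro hh
    exact h (e.injective hh)

end ConjInv

open Matrix Polynomial

namespace ConjInv

lemma charpoly_diagonal {n : ℕ} (v : Fin n → ℂ) :
    (diagonal v).charpoly = ∏ i : Fin n, (X - C (v i)) := by
  have h : (diagonal v).charmatrix = diagonal (fun i => (X : ℂ[X]) - C (v i)) := by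
    ext i j
    by_cases hij : i = j
    · subst hij; simp [Matrix.charmatrix_apply_eq]
    · simp [Matrix.charmatrix_apply_ne _ _ _ hij, Matrix.diagonal_apply_ne _ hij]
  rw [Matrix.charpoly, h, Matrix.det_diagonal]

lemma inj_of_prod_eq {n : ℕ} (μ v : Fin n → ℂ)
    (h : ∏ i : Fin n, (X - C (μ i)) = ∏ i : Fin n, (X - C (v i)))
    (hv : Function.Injective v) : Function.Injective μ := by
  have hroots : (Finset.univ.val.map μ) = (Finset.univ.val.map v) := by
    have h1 := Polynomial.roots_multiset_prod_X_sub_C (Finset.univ.val.map μ)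
    have h2 := Polynomial.roots_multiset_prod_X_sub_C (Finset.univ.val.map v)
    have e1 : (∏ i : Fin n, (X - C (μ i))) = ((Finset.univ.val.map μ).map fun a => X - C a).prod := by
      rw [Multiset.map_map]; rfl
    have e2 : (∏ i : Fin n, (X - C (v i))) = ((Finset.univ.val.map v).map fun a => X - C a).prod := by
      rw [Multiset.map_map]; rfl
    rw [← h1, ← h2, ← e1, ← e2, h]
  have hnodup : (Finset.univ.val.map μ).Nodup := by
    rw [hroots]
    exact Finset.univ.nodup.map hv
  intro a b hab
  have := Multiset.inj_on_of_nodup_map hnodup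
  exact this a (by simp) b (by simp) hab

end ConjInv

namespace ConjInv
lemma eval_bind₁ {σ τ : Type*} (f : τ → ℂ) (g : σ → MvPolynomial τ ℂ)
    (φ : MvPolynomial σ ℂ) :
    MvPolynomial.eval f (MvPolynomial.bind₁ g φ) =
      MvPolynomial.eval (fun i => MvPolynomial.eval f (g i)) φ :=
  MvPolynomial.aeval_bind₁ f g φ
end ConjInv

open ConjInv in
/-- Conjugation-invariant polynomial functions on `n × n` complex matrices
are exactly the polynomials in the coefficients of the characteristic
polynomial. -/
theorem conj_invariant_poly_iff_poly_in_charpoly_coeffs (n : ℕ) (hn : 1 ≤ n)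
    (P : MvPolynomial (Fin n × Fin n) ℂ) :
    (∀ (A S : Matrix (Fin n) (Fin n) ℂ), IsUnit S.det →
      MvPolynomial.eval (fun p => (S * A * S⁻¹) p.1 p.2) P =
        MvPolynomial.eval (fun p => A p.1 p.2) P) ↔
      ∃ Q : MvPolynomial (Fin n) ℂ, ∀ A : Matrix (Fin n) (Fin n) ℂ,
        MvPolynomial.eval (fun p => A p.1 p.2) P =
          MvPolynomial.eval (fun i : Fin n => A.charpoly.coeff (i : ℕ)) Q := by
  constructor
  · intro hinv
    -- the restriction of P to diagonal matrices
    set pdiag : MvPolynomial (Fin n) ℂ :=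
      MvPolynomial.bind₁ (fun q : Fin n × Fin n =>
        if q.1 = q.2 then (MvPolynomial.X q.1 : MvPolynomial (Fin n) ℂ) else 0) P with hpdiag
    have eval_pdiag : ∀ x : Fin n → ℂ,
        MvPolynomial.eval x pdiag =
          MvPolynomial.eval (fun q : Fin n × Fin n => diagonal x q.1 q.2) P := by
      intro x
      rw [hpdiag, eval_bind₁]
      have hfun : (fun q : Fin n × Fin n => MvPolynomial.eval x
          (if q.1 = q.2 then (MvPolynomial.X q.1 : MvPolynomial (Fin n) ℂ) else 0)) =
          (fun q : Fin n × Fin n => diagonal x q.1 q.2) := by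
        funext q
        by_cases h : q.1 = q.2
        · simp [h, Matrix.diagonal_apply, MvPolynomial.eval_X]
        · simp [h, Matrix.diagonal_apply_ne _ h]
      rw [hfun]
    -- pdiag is symmetric
    have hsym : pdiag.IsSymmetric := by
      intro e
      apply MvPolynomial.funext
      intro x
      rw [MvPolynomial.eval_rename, eval_pdiag, eval_pdiag]
      obtain ⟨Pe, hPedet, hPe⟩ := perm_conj e x
      rw [hPe]
      exact hinv (diagonal x) Pe hPedet
    -- FTSP applications
    obtain ⟨DP, hDP⟩ := MvPolynomial.esymmAlgHom_surjective (σ := Fin n) (R := ℂ) (n := n)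
      (le_of_eq (Fintype.card_fin n)) ⟨pdiag, hsym⟩
    have hDP' : MvPolynomial.bind₁
        (fun i : Fin n => MvPolynomial.esymm (Fin n) ℂ ((i : ℕ) + 1)) DP = pdiag := by
      have h := congrArg Subtype.val hDP
      rw [MvPolynomial.esymmAlgHom_apply] at h
      exact h
    obtain ⟨Dd, hDd⟩ := MvPolynomial.esymmAlgHom_surjective (σ := Fin n) (R := ℂ) (n := n)
      (le_of_eq (Fintype.card_fin n)) ⟨delta n, delta_isSymmetric n⟩
    have hDd' : MvPolynomial.bind₁
        (fun i : Fin n => MvPolynomial.esymm (Fin n) ℂ ((i : ℕ) + 1)) Dd = delta n := by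
      have h := congrArg Subtype.val hDd
      rw [MvPolynomial.esymmAlgHom_apply] at h
      exact h
    refine ⟨psi DP, ?_⟩
    -- translate into polynomials in the matrix entries
    set g : Fin n → MvPolynomial (Fin n × Fin n) ℂ := fun k => gam n (k : ℕ) with hg
    set p2 : MvPolynomial (Fin n × Fin n) ℂ := MvPolynomial.bind₁ g (psi DP) with hp2
    set dent : MvPolynomial (Fin n × Fin n) ℂ := MvPolynomial.bind₁ g (psi Dd) with hdent
    have eval_p2 : ∀ A : Matrix (Fin n) (Fin n) ℂ,
        MvPolynomial.eval (fun q : Fin n × Fin n => A q.1 q.2) p2 =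
          MvPolynomial.eval (fun k : Fin n => A.charpoly.coeff (k : ℕ)) (psi DP) := by
      intro A
      rw [hp2, eval_bind₁]
      have hfun : (fun k : Fin n =>
          MvPolynomial.eval (fun q : Fin n × Fin n => A q.1 q.2) (g k)) =
          (fun k : Fin n => A.charpoly.coeff (k : ℕ)) := by
        funext k
        rw [hg, eval_gam]
      rw [hfun]
    have eval_dent : ∀ A : Matrix (Fin n) (Fin n) ℂ,
        MvPolynomial.eval (fun q : Fin n × Fin n => A q.1 q.2) dent =
          MvPolynomial.eval (fun k : Fin n => A.charpoly.coeff (k : ℕ)) (psi Dd) := by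
      intro A
      rw [hdent, eval_bind₁]
      have hfun : (fun k : Fin n =>
          MvPolynomial.eval (fun q : Fin n × Fin n => A q.1 q.2) (g k)) =
          (fun k : Fin n => A.charpoly.coeff (k : ℕ)) := by
        funext k
        rw [hg, eval_gam]
      rw [hfun]
    -- matrices with distinct eigenvalues
    have hdistinct : ∀ (A : Matrix (Fin n) (Fin n) ℂ) (μ : Fin n → ℂ),
        A.charpoly = (∏ i : Fin n, (X - C (μ i)) : ℂ[X]) → Function.Injective μ →
        MvPolynomial.eval (fun q : Fin n × Fin n => A q.1 q.2) P =
          MvPolynomial.eval (fun k : Fin n => A.charpoly.coeff (k : ℕ)) (psi DP) := by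
      intro A μ hchar hinj
      have hc : ∀ k : Fin n, A.charpoly.coeff (k : ℕ) =
          ((∏ i : Fin n, (X - C (μ i)) : ℂ[X])).coeff (k : ℕ) := by
        intro k; rw [hchar]
      rw [eval_psi DP μ _ hc, hDP', eval_pdiag]
      obtain ⟨S, hSdet, hSA⟩ := exists_diagonalization A μ hchar hinj
      rw [hSA]
      exact hinv (diagonal μ) S hSdet
    -- the discriminant polynomial detects distinctness
    have dent_val : ∀ (A : Matrix (Fin n) (Fin n) ℂ) (μ : Fin n → ℂ),
        A.charpoly = (∏ i : Fin n, (X - C (μ i)) : ℂ[X]) →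
        MvPolynomial.eval (fun q : Fin n × Fin n => A q.1 q.2) dent =
          MvPolynomial.eval μ (delta n) := by
      intro A μ hchar
      have hc : ∀ k : Fin n, A.charpoly.coeff (k : ℕ) =
          ((∏ i : Fin n, (X - C (μ i)) : ℂ[X])).coeff (k : ℕ) := by
        intro k; rw [hchar]
      rw [eval_dent A, eval_psi Dd μ _ hc, hDd']
    -- density argument
    have hzero : (P - p2) * dent = 0 := by
      apply MvPolynomial.funext
      intro x
      set A : Matrix (Fin n) (Fin n) ℂ := Matrix.of (fun i j => x (i, j)) with hA
      have hx : x = fun q : Fin n × Fin n => A q.1 q.2 := by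
        funext q
        cases q
        rfl
      obtain ⟨μ, hchar⟩ := exists_roots_fun A
      rw [_root_.map_mul, map_sub, hx, map_zero]
      by_cases hd : MvPolynomial.eval (fun q : Fin n × Fin n => A q.1 q.2) dent = 0
      · rw [hd, mul_zero]
      · have hinj : Function.Injective μ := by
          rw [dent_val A μ hchar] at hd
          exact (delta_eval_ne_zero_iff μ).mp hd
        rw [hdistinct A μ hchar hinj, ← eval_p2 A, sub_self, zero_mul]
    have hdentne : dent ≠ 0 := by
      intro h0
      set v : Fin n → ℂ := fun i => ((i : ℕ) : ℂ) with hv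
      have hvinj : Function.Injective v := by
        intro a b hab
        rw [hv] at hab
        exact Fin.ext (Nat.cast_injective hab)
      set A : Matrix (Fin n) (Fin n) ℂ := diagonal v with hA
      obtain ⟨μ, hchar⟩ := exists_roots_fun A
      have hchar2 : A.charpoly = (∏ i : Fin n, (X - C (v i)) : ℂ[X]) := ConjInv.charpoly_diagonal v
      have hinj : Function.Injective μ :=
        inj_of_prod_eq μ v (hchar.symm.trans hchar2) hvinj
      have hval := dent_val A μ hchar
      rw [h0, map_zero] at hval
      exact ((delta_eval_ne_zero_iff μ).mpr hinj) hval.symm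
    have hPp2 : P = p2 := by
      rcases mul_eq_zero.mp hzero with h | h
      · exact sub_eq_zero.mp h
      · exact absurd h hdentne
    intro A
    rw [hPp2, eval_p2 A]
  · rintro ⟨Q, hQ⟩ A S hS
    rw [hQ, hQ, ConjInv.charpoly_conj A S hS]
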